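/- Let 𝒳 be a Polish space, W : 𝒳 → (0,∞) continuous, and (νₙ), ν_∞ nonnegative Borel measures with ∫ W dνₙ < ∞ and ∫ φ dνₙ → ∫ φ dν_∞ for every continuous φ with |φ| ≤ W. If φₙ, φ_∞ are continuous with φₙ → φ_∞ uniformly on compacts and sup_n sup_x |φₙ(x)|/W(x) < ∞, then ∫ φₙ dνₙ → ∫ φ_∞ dν_∞. -/

import Mathlib

open MeasureTheory Filter Topology
open scoped ENNReal NNReal

/-- Tightness of a sequence of finite measures on a Polish space satisfying the
closed-set limsup bound from the portmanteau theorem. -/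
lemma aux_tight {𝒳 : Type*} [MetricSpace 𝒳] [CompleteSpace 𝒳] [SecondCountableTopology 𝒳]
    [MeasurableSpace 𝒳] [BorelSpace 𝒳]
    (μs : ℕ → Measure 𝒳) (μ : Measure 𝒳) [∀ n, IsFiniteMeasure (μs n)] [IsFiniteMeasure μ]
    (hls : ∀ F : Set 𝒳, IsClosed F → atTop.limsup (fun n => μs n F) ≤ μ F)
    {ε : ℝ≥0∞} (hε : 0 < ε) :
    ∃ K : Set 𝒳, IsCompact K ∧ ∀ n, μs n Kᶜ ≤ ε := by
  rcases isEmpty_or_nonempty 𝒳 with hE | hNE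
  · refine ⟨∅, isCompact_empty, fun n => ?_⟩
    have h0 : ((∅ : Set 𝒳)ᶜ) = (∅ : Set 𝒳) := Set.eq_empty_of_isEmpty _
    simp [h0]
  classical
  set u := TopologicalSpace.denseSeq 𝒳 with hu
  set r : ℕ → ℝ := fun m => 1 / (m + 1 : ℝ) with hr
  have hrpos : ∀ m, 0 < r m := fun m => by positivity
  set g : ℕ → ℕ → Set 𝒳 := fun m N => ⋃ i ∈ Finset.range N, Metric.ball (u i) (r m) with hg
  have g_open : ∀ m N, IsOpen (g m N) := fun m N =>
    isOpen_biUnion fun i _ => Metric.isOpen_ball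
  have g_mono : ∀ m, Monotone (g m) := by
    intro m N N' hNN'
    exact Set.biUnion_subset_biUnion_left (Finset.range_subset_range.2 hNN')
  have g_cover : ∀ m, (⋃ N, g m N) = Set.univ := by
    intro m
    rw [Set.eq_univ_iff_forall]
    intro x
    obtain ⟨i, hi⟩ := Metric.denseRange_iff.1 (TopologicalSpace.denseRange_denseSeq 𝒳) x
      (r m) (hrpos m)
    exact Set.mem_iUnion.2 ⟨i + 1, Set.mem_biUnion (Finset.self_mem_range_succ i) hi⟩
  have keyA : ∀ (ρ : Measure 𝒳) [IsFiniteMeasure ρ], ∀ m,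
      Tendsto (fun N => ρ ((g m N)ᶜ)) atTop (𝓝 0) := by
    intro ρ _ m
    have h1 := tendsto_measure_iInter_atTop (μ := ρ) (s := fun N => (g m N)ᶜ)
      (fun N => ((g_open m N).isClosed_compl).measurableSet.nullMeasurableSet)
      (fun N N' hNN' => Set.compl_subset_compl.2 (g_mono m hNN'))
      ⟨0, measure_ne_top _ _⟩
    have h2 : (⋂ N, (g m N)ᶜ) = (∅ : Set 𝒳) := by
      rw [← Set.compl_iUnion, g_cover, Set.compl_univ]
    rw [h2, measure_empty] at h1
    exact h1
  have keyB : ∀ (m : ℕ) (δ : ℝ≥0∞), 0 < δ → ∃ N, ∀ n, μs n ((g m N)ᶜ) ≤ δ := by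
    intro m δ hδ
    obtain ⟨N₁, hN₁⟩ := eventually_atTop.1 ((keyA μ m).eventually_lt_const hδ)
    have hlim : atTop.limsup (fun n => μs n ((g m N₁)ᶜ)) ≤ μ ((g m N₁)ᶜ) :=
      hls _ (g_open m N₁).isClosed_compl
    obtain ⟨n₀, hn₀⟩ := eventually_atTop.1
      (eventually_lt_of_limsup_lt (lt_of_le_of_lt hlim (hN₁ N₁ le_rfl)))
    have hfin : ∀ n : ℕ, ∃ N, μs n ((g m N)ᶜ) < δ := fun n =>
      ((keyA (μs n) m).eventually_lt_const hδ).exists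
    choose N₂ hN₂ using hfin
    refine ⟨max N₁ ((Finset.range n₀).sup N₂), fun n => ?_⟩
    have hmono : ∀ {N N' : ℕ}, N ≤ N' → μs n ((g m N')ᶜ) ≤ μs n ((g m N)ᶜ) :=
      fun h => measure_mono (Set.compl_subset_compl.2 (g_mono m h))
    by_cases hn : n₀ ≤ n
    · exact le_trans (hmono (le_max_left _ _)) (hn₀ n hn).le
    · refine le_trans (hmono ?_) (hN₂ n).le
      exact le_max_of_le_right (Finset.le_sup (Finset.mem_range.2 (not_le.1 hn)))
  have hδpos : ∀ m : ℕ, (0 : ℝ≥0∞) < ε * 2⁻¹ ^ (m + 1) := by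
    intro m
    refine ENNReal.mul_pos hε.ne' ?_
    exact (pow_ne_zero _ (ENNReal.inv_ne_zero.2 ENNReal.ofNat_ne_top))
  choose N hN using fun m => keyB m _ (hδpos m)
  refine ⟨⋂ m, closure (g m (N m)), ?_, ?_⟩
  · refine TotallyBounded.isCompact_of_isClosed ?_
      (isClosed_iInter fun m => isClosed_closure)
    rw [Metric.totallyBounded_iff]
    intro δ hδ
    obtain ⟨m, hm⟩ := exists_nat_one_div_lt hδ
    refine ⟨u '' (Finset.range (N m) : Set ℕ), (Set.finite_range fun i : Finset.range (N m) => u i).subset ?_, ?_⟩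
    · rintro _ ⟨i, hi, rfl⟩
      exact ⟨⟨i, hi⟩, rfl⟩
    · intro x hx
      have hxm : x ∈ closure (g m (N m)) := Set.mem_iInter.1 hx m
      have hsub : closure (g m (N m)) ⊆
          ⋃ i ∈ Finset.range (N m), Metric.closedBall (u i) (r m) := by
        refine closure_minimal (Set.iUnion₂_mono fun i _ => Metric.ball_subset_closedBall) ?_
        exact Set.Finite.isClosed_biUnion (Finset.range (N m)).finite_toSet
          (fun i _ => Metric.isClosed_closedBall)
      obtain ⟨i, hi, hxi⟩ := Set.mem_iUnion₂.1 (hsub hxm)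
      refine Set.mem_biUnion ⟨i, hi, rfl⟩ ?_
      exact lt_of_le_of_lt (Metric.mem_closedBall.1 hxi) hm
  · intro n
    have h1 : (⋂ m, closure (g m (N m)))ᶜ = ⋃ m, (closure (g m (N m)))ᶜ := by
      rw [Set.compl_iInter]
    calc μs n (⋂ m, closure (g m (N m)))ᶜ
        ≤ ∑' m, μs n ((closure (g m (N m)))ᶜ) := by rw [h1]; exact measure_iUnion_le _
      _ ≤ ∑' m, ε * 2⁻¹ ^ (m + 1) := by
          refine ENNReal.tsum_le_tsum fun m => ?_
          exact le_trans (measure_mono (Set.compl_subset_compl.2 subset_closure)) (hN m n)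
      _ = ε := by
          rw [ENNReal.tsum_mul_left]
          have h2 : ∑' m : ℕ, (2⁻¹ : ℝ≥0∞) ^ (m + 1) = 1 := by
            simp_rw [pow_succ]
            rw [ENNReal.tsum_mul_right, ENNReal.tsum_geometric, ENNReal.one_sub_inv_two, inv_inv]
            exact ENNReal.mul_inv_cancel two_ne_zero ENNReal.ofNat_ne_top
          rw [h2, mul_one]

theorem converging_integrals
    {𝒳 : Type*} [MetricSpace 𝒳] [CompleteSpace 𝒳] [SecondCountableTopology 𝒳]
    [MeasurableSpace 𝒳] [BorelSpace 𝒳]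
    (W : 𝒳 → ℝ) (hWc : Continuous W) (hWpos : ∀ x, 0 < W x)
    (ν : ℕ → Measure 𝒳) (νlim : Measure 𝒳)
    (hWint : ∀ n, Integrable W (ν n))
    (hconv : ∀ φ : 𝒳 → ℝ, Continuous φ → (∀ x, |φ x| ≤ W x) →
      Tendsto (fun n => ∫ x, φ x ∂(ν n)) atTop (nhds (∫ x, φ x ∂νlim)))
    (φ : ℕ → 𝒳 → ℝ) (φlim : 𝒳 → ℝ)
    (hφc : ∀ n, Continuous (φ n)) (hφlimc : Continuous φlim)
    (hunif : ∀ K : Set 𝒳, IsCompact K → TendstoUniformlyOn φ φlim atTop K)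
    (hdom : ∃ C : ℝ, ∀ n x, |φ n x| ≤ C * W x) :
    Tendsto (fun n => ∫ x, φ n x ∂(ν n)) atTop (nhds (∫ x, φlim x ∂νlim)) := by
  obtain ⟨C₀, hC₀⟩ := hdom
  set C := max C₀ 1 with hC
  have hCpos : (0 : ℝ) < C := lt_of_lt_of_le one_pos (le_max_right _ _)
  have hdom' : ∀ n x, |φ n x| ≤ C * W x := fun n x =>
    (hC₀ n x).trans (mul_le_mul_of_nonneg_right (le_max_left _ _) (hWpos x).le)
  have hφlim_dom : ∀ x, |φlim x| ≤ C * W x := by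
    intro x
    have hx : Tendsto (fun n => φ n x) atTop (𝓝 (φlim x)) :=
      (hunif {x} isCompact_singleton).tendsto_at rfl
    exact le_of_tendsto hx.abs (Eventually.of_forall fun n => hdom' n x)
  -- general version of hconv with an arbitrary constant
  have hgen : ∀ (g : 𝒳 → ℝ) (c : ℝ), Continuous g → (∀ x, |g x| ≤ c * W x) →
      Tendsto (fun n => ∫ x, g x ∂(ν n)) atTop (𝓝 (∫ x, g x ∂νlim)) := by
    intro g c hg hb
    set c' := max c 1 with hc'
    have hc'pos : (0 : ℝ) < c' := lt_of_lt_of_le one_pos (le_max_right _ _)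
    have hb' : ∀ x, |g x| ≤ c' * W x := fun x =>
      (hb x).trans (mul_le_mul_of_nonneg_right (le_max_left _ _) (hWpos x).le)
    have key := hconv (fun x => c'⁻¹ * g x) (continuous_const.mul hg) ?_
    · have h2 : ∀ (ρ : Measure 𝒳), c' * ∫ x, c'⁻¹ * g x ∂ρ = ∫ x, g x ∂ρ := by
        intro ρ
        rw [integral_const_mul, ← mul_assoc, mul_inv_cancel₀ hc'pos.ne', one_mul]
      have h3 := key.const_mul c'
      simpa only [h2] using h3
    · intro x
      rw [abs_mul, abs_of_pos (inv_pos.2 hc'pos)]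
      calc c'⁻¹ * |g x| ≤ c'⁻¹ * (c' * W x) :=
            mul_le_mul_of_nonneg_left (hb' x) (inv_pos.2 hc'pos).le
        _ = W x := by field_simp
  have hWabs : ∀ x, |W x| ≤ 1 * W x := fun x => by
    rw [one_mul, abs_of_pos (hWpos x)]
  have hWtends : Tendsto (fun n => ∫ x, W x ∂(ν n)) atTop (𝓝 (∫ x, W x ∂νlim)) :=
    hgen W 1 hWc hWabs
  have hφint : ∀ n, Integrable (φ n) (ν n) := by
    intro n
    refine ((hWint n).const_mul C).mono (hφc n).aestronglyMeasurable ?_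
    refine Eventually.of_forall fun x => ?_
    rw [Real.norm_eq_abs, Real.norm_eq_abs]
    exact (hdom' n x).trans (le_abs_self _)
  have hφlimint : ∀ n, Integrable φlim (ν n) := by
    intro n
    refine ((hWint n).const_mul C).mono hφlimc.aestronglyMeasurable ?_
    refine Eventually.of_forall fun x => ?_
    rw [Real.norm_eq_abs, Real.norm_eq_abs]
    exact (hφlim_dom x).trans (le_abs_self _)
  have T2 : Tendsto (fun n => ∫ x, φlim x ∂(ν n)) atTop (𝓝 (∫ x, φlim x ∂νlim)) :=
    hgen φlim C hφlimc hφlim_dom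
  have habs_bound : ∀ n, |∫ x, φ n x ∂(ν n)| ≤ C * ∫ x, W x ∂(ν n) := by
    intro n
    calc |∫ x, φ n x ∂(ν n)| ≤ ∫ x, |φ n x| ∂(ν n) := by
          simpa [Real.norm_eq_abs] using norm_integral_le_integral_norm (μ := ν n) (φ n)
      _ ≤ ∫ x, C * W x ∂(ν n) :=
          integral_mono (hφint n).abs ((hWint n).const_mul C) fun x => hdom' n x
      _ = C * ∫ x, W x ∂(ν n) := integral_const_mul _ _
  have habs_boundlim : ∀ n, |∫ x, φlim x ∂(ν n)| ≤ C * ∫ x, W x ∂(ν n) := by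
    intro n
    calc |∫ x, φlim x ∂(ν n)| ≤ ∫ x, |φlim x| ∂(ν n) := by
          simpa [Real.norm_eq_abs] using norm_integral_le_integral_norm (μ := ν n) φlim
      _ ≤ ∫ x, C * W x ∂(ν n) :=
          integral_mono (hφlimint n).abs ((hWint n).const_mul C) fun x => hφlim_dom x
      _ = C * ∫ x, W x ∂(ν n) := integral_const_mul _ _
  by_cases hWlim : Integrable W νlim
  · -- main case : W is integrable w.r.t. the limit measure
    -- the measures with density W
    set μ' : ℕ → Measure 𝒳 := fun n => (ν n).withDensity (fun x => ENNReal.ofReal (W x))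
      with hμ'
    set μ'lim : Measure 𝒳 := νlim.withDensity (fun x => ENNReal.ofReal (W x)) with hμ'lim
    have hfin : ∀ (ρ : Measure 𝒳), Integrable W ρ →
        IsFiniteMeasure (ρ.withDensity fun x => ENNReal.ofReal (W x)) := by
      intro ρ hρ
      constructor
      rw [withDensity_apply _ MeasurableSet.univ, setLIntegral_univ]
      have h1 : ∀ x, ENNReal.ofReal (W x) = (‖W x‖₊ : ℝ≥0∞) := fun x => by
        exact (Real.enorm_eq_ofReal (hWpos x).le).symm
      simp_rw [h1]
      exact hρ.2
    haveI inst1 : ∀ n, IsFiniteMeasure (μ' n) := fun n => hfin _ (hWint n)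
    haveI inst2 : IsFiniteMeasure μ'lim := hfin _ hWlim
    have hWmeas : Measurable fun x => Real.toNNReal (W x) :=
      (continuous_real_toNNReal.comp hWc).measurable
    have hrepr : ∀ (ρ : Measure 𝒳) (f : 𝒳 → ℝ),
        ∫ x, f x ∂(ρ.withDensity fun x => ENNReal.ofReal (W x)) = ∫ x, W x * f x ∂ρ := by
      intro ρ f
      have : (fun x => ENNReal.ofReal (W x))
          = (fun x => ((Real.toNNReal (W x) : ℝ≥0) : ℝ≥0∞)) := rfl
      rw [this, integral_withDensity_eq_integral_smul hWmeas]
      congr 1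
      funext x
      simp [NNReal.smul_def, Real.coe_toNNReal _ (hWpos x).le]
    -- weak convergence of the finite measures μ' n to μ'lim
    set Fn : ℕ → FiniteMeasure 𝒳 := fun n => ⟨μ' n, inst1 n⟩ with hFn
    set Flim : FiniteMeasure 𝒳 := ⟨μ'lim, inst2⟩ with hFlim
    have hFtends : Tendsto Fn atTop (𝓝 Flim) := by
      rw [FiniteMeasure.tendsto_iff_forall_integral_tendsto]
      intro f
      have hcoe : ∀ n, ∫ x, f x ∂((Fn n : Measure 𝒳)) = ∫ x, W x * f x ∂(ν n) :=
        fun n => hrepr _ _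
      have hcoelim : ∫ x, f x ∂((Flim : Measure 𝒳)) = ∫ x, W x * f x ∂νlim := hrepr _ _
      simp_rw [hcoe, hcoelim]
      refine hgen (fun x => W x * f x) ‖f‖ (hWc.mul f.continuous) fun x => ?_
      rw [abs_mul, abs_of_pos (hWpos x), mul_comm (‖f‖)]
      exact mul_le_mul_of_nonneg_left (by simpa [Real.norm_eq_abs] using f.norm_coe_le_norm x)
        (hWpos x).le
    have hls : ∀ F : Set 𝒳, IsClosed F → atTop.limsup (fun n => μ' n F) ≤ μ'lim F :=
      fun F hF => FiniteMeasure.limsup_measure_closed_le_of_tendsto hFtends hF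
    -- tail bound for set integrals of W
    have htail : ∀ (n : ℕ) (s : Set 𝒳), MeasurableSet s → ∀ t : ℝ, 0 ≤ t →
        μ' n s ≤ ENNReal.ofReal t → ∫ x in s, W x ∂(ν n) ≤ t := by
      intro n s hs t ht hle
      have h1 : ENNReal.ofReal (∫ x in s, W x ∂(ν n)) = ∫⁻ x in s, ENNReal.ofReal (W x) ∂(ν n) :=
        ofReal_integral_eq_lintegral_ofReal ((hWint n).restrict)
          (Eventually.of_forall fun x => (hWpos x).le)
      have h2 : μ' n s = ∫⁻ x in s, ENNReal.ofReal (W x) ∂(ν n) := withDensity_apply _ hs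
      rw [← ENNReal.ofReal_le_ofReal_iff ht, h1, ← h2]
      exact hle
    -- the difference term tends to zero
    have hDnn : ∀ n, (0 : ℝ) ≤ ∫ x, |φ n x - φlim x| ∂(ν n) :=
      fun n => integral_nonneg fun x => abs_nonneg _
    have hdiff_int : ∀ n, Integrable (fun x => |φ n x - φlim x|) (ν n) :=
      fun n => ((hφint n).sub (hφlimint n)).abs
    have hdiff_dom : ∀ n x, |φ n x - φlim x| ≤ 2 * C * W x := by
      intro n x
      calc |φ n x - φlim x| ≤ |φ n x| + |φlim x| := abs_sub _ _
        _ ≤ C * W x + C * W x := add_le_add (hdom' n x) (hφlim_dom x)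
        _ = 2 * C * W x := by ring
    have T1' : Tendsto (fun n => ∫ x, |φ n x - φlim x| ∂(ν n)) atTop (𝓝 0) := by
      rw [Metric.tendsto_atTop]
      intro ε hε
      set t : ℝ := ε / (8 * C) with htdef
      have ht : (0 : ℝ) < t := by positivity
      obtain ⟨K, hKcomp, hKle⟩ := aux_tight μ' μ'lim hls (ENNReal.ofReal_pos.2 ht)
      have hKmeas : MeasurableSet K := hKcomp.isClosed.measurableSet
      have htailK : ∀ n, ∫ x in Kᶜ, W x ∂(ν n) ≤ t :=
        fun n => htail n Kᶜ hKmeas.compl t ht.le (hKle n)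
      have htail2 : ∀ n, ∫ x in Kᶜ, |φ n x - φlim x| ∂(ν n) ≤ 2 * C * t := by
        intro n
        calc ∫ x in Kᶜ, |φ n x - φlim x| ∂(ν n)
            ≤ ∫ x in Kᶜ, 2 * C * W x ∂(ν n) := by
              refine setIntegral_mono_on ((hdiff_int n).integrableOn)
                (((hWint n).const_mul _).integrableOn) hKmeas.compl
                fun x _ => hdiff_dom n x
          _ = 2 * C * ∫ x in Kᶜ, W x ∂(ν n) := integral_const_mul _ _
          _ ≤ 2 * C * t := mul_le_mul_of_nonneg_left (htailK n) (by positivity)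
      have h2Ct : 2 * C * t = ε / 4 := by
        rw [htdef]; field_simp; ring
      rcases Set.eq_empty_or_nonempty K with hKe | ⟨x₀, hx₀⟩
      · refine ⟨0, fun n _ => ?_⟩
        rw [Real.dist_eq, sub_zero, abs_of_nonneg (hDnn n)]
        have : ∫ x, |φ n x - φlim x| ∂(ν n) = ∫ x in Kᶜ, |φ n x - φlim x| ∂(ν n) := by
          rw [hKe, Set.compl_empty, setIntegral_univ]
        rw [this]
        calc ∫ x in Kᶜ, |φ n x - φlim x| ∂(ν n) ≤ 2 * C * t := htail2 n
          _ = ε / 4 := h2Ct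
          _ < ε := by linarith
      · obtain ⟨z, hzK, hz⟩ := hKcomp.exists_isMinOn ⟨x₀, hx₀⟩ hWc.continuousOn
        set m : ℝ := W z with hmdef
        have hm : (0 : ℝ) < m := hWpos z
        set M : ℝ := ∫ x, W x ∂νlim with hMdef
        have hM : (0 : ℝ) ≤ M := integral_nonneg fun x => (hWpos x).le
        set δ : ℝ := (ε / 4) * m / (M + 1) with hδdef
        have hδ : (0 : ℝ) < δ := by positivity
        have ev1 := Metric.tendstoUniformlyOn_iff.1 (hunif K hKcomp) δ hδ
        have ev2 := hWtends.eventually_lt_const (show M < M + 1 by linarith)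
        obtain ⟨N, hNev⟩ := eventually_atTop.1 (ev1.and ev2)
        refine ⟨N, fun n hn => ?_⟩
        obtain ⟨h1, h2⟩ := hNev n hn
        rw [Real.dist_eq, sub_zero, abs_of_nonneg (hDnn n)]
        have hb1 : ∫ x in K, |φ n x - φlim x| ∂(ν n) ≤ ε / 4 := by
          have hple : ∀ x ∈ K, |φ n x - φlim x| ≤ (δ / m) * W x := by
            intro x hx
            have hd : |φ n x - φlim x| < δ := by
              have := h1 x hx
              rw [dist_comm, Real.dist_eq] at this
              exact this
            calc |φ n x - φlim x| ≤ δ := hd.le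
              _ = (δ / m) * m := by field_simp
              _ ≤ (δ / m) * W x := mul_le_mul_of_nonneg_left (hz hx) (by positivity)
          calc ∫ x in K, |φ n x - φlim x| ∂(ν n)
              ≤ ∫ x in K, (δ / m) * W x ∂(ν n) :=
                setIntegral_mono_on ((hdiff_int n).integrableOn)
                  (((hWint n).const_mul _).integrableOn) hKmeas hple
            _ = (δ / m) * ∫ x in K, W x ∂(ν n) := integral_const_mul _ _
            _ ≤ (δ / m) * ∫ x, W x ∂(ν n) := by
                refine mul_le_mul_of_nonneg_left ?_ (by positivity)
                exact setIntegral_le_integral (hWint n)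
                  (Eventually.of_forall fun x => (hWpos x).le)
            _ ≤ (δ / m) * (M + 1) := mul_le_mul_of_nonneg_left h2.le (by positivity)
            _ = ε / 4 := by rw [hδdef]; field_simp
        have hsplit : ∫ x, |φ n x - φlim x| ∂(ν n)
            = ∫ x in K, |φ n x - φlim x| ∂(ν n) + ∫ x in Kᶜ, |φ n x - φlim x| ∂(ν n) :=
          (integral_add_compl hKmeas (hdiff_int n)).symm
        rw [hsplit]
        calc ∫ x in K, |φ n x - φlim x| ∂(ν n) + ∫ x in Kᶜ, |φ n x - φlim x| ∂(ν n)
            ≤ ε / 4 + 2 * C * t := add_le_add hb1 (htail2 n)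
          _ = ε / 4 + ε / 4 := by rw [h2Ct]
          _ < ε := by linarith
    -- combine
    have hDle : ∀ n, |∫ x, φ n x ∂(ν n) - ∫ x, φlim x ∂(ν n)|
        ≤ ∫ x, |φ n x - φlim x| ∂(ν n) := by
      intro n
      rw [← integral_sub (hφint n) (hφlimint n)]
      simpa [Real.norm_eq_abs] using
        norm_integral_le_integral_norm (μ := ν n) (fun x => φ n x - φlim x)
    have T1 : Tendsto (fun n => ∫ x, φ n x ∂(ν n) - ∫ x, φlim x ∂(ν n)) atTop (𝓝 0) := by
      have hneg : Tendsto (fun n => -(∫ x, |φ n x - φlim x| ∂(ν n))) atTop (𝓝 0) := by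
        simpa using T1'.neg
      refine tendsto_of_tendsto_of_tendsto_of_le_of_le hneg T1' ?_ ?_
      · exact fun n => (abs_le.1 (hDle n)).1
      · exact fun n => (abs_le.1 (hDle n)).2
    have := T1.add T2
    simpa using this
  · -- degenerate case : W is not integrable w.r.t. νlim
    have hW0 : ∫ x, W x ∂νlim = 0 := integral_undef hWlim
    have hWto0 : Tendsto (fun n => ∫ x, W x ∂(ν n)) atTop (𝓝 0) := by
      rw [hW0] at hWtends; exact hWtends
    have hCW0 : Tendsto (fun n => C * ∫ x, W x ∂(ν n)) atTop (𝓝 0) := by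
      simpa using hWto0.const_mul C
    have hCW0n : Tendsto (fun n => -(C * ∫ x, W x ∂(ν n))) atTop (𝓝 0) := by
      simpa using hCW0.neg
    have lim1 : Tendsto (fun n => ∫ x, φ n x ∂(ν n)) atTop (𝓝 0) := by
      refine tendsto_of_tendsto_of_tendsto_of_le_of_le hCW0n hCW0 ?_ ?_
      · exact fun n => (abs_le.1 (habs_bound n)).1
      · exact fun n => (abs_le.1 (habs_bound n)).2
    have lim2 : Tendsto (fun n => ∫ x, φlim x ∂(ν n)) atTop (𝓝 0) := by
      refine tendsto_of_tendsto_of_tendsto_of_le_of_le hCW0n hCW0 ?_ ?_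
      · exact fun n => (abs_le.1 (habs_boundlim n)).1
      · exact fun n => (abs_le.1 (habs_boundlim n)).2
    have hzero : ∫ x, φlim x ∂νlim = 0 := tendsto_nhds_unique T2 lim2
    rw [hzero]
    exact lim1
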